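/- Let G be a finite simple graph whose vertex set carries a linear order, and let L be the set of vertices of degree exactly 1 (leaves). Define the raked set D as the set of leaves v such that, letting u be the unique neighbor of v, either u is not a leaf, or v < u in the linear order. Then |D| ≥ |L|/2. -/

import Mathlib

theorem stmt_2 {V : Type*} [Fintype V] [LinearOrder V] (G : SimpleGraph V)
    [DecidableRel G.Adj] :
    (Finset.univ.filter (fun v => G.degree v = 1)).card ≤
      2 * (Finset.univ.filter
        (fun v => G.degree v = 1 ∧
          ∀ u ∈ G.neighborFinset v, G.degree u ≠ 1 ∨ v < u)).card := by
  classical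
  set L := Finset.univ.filter (fun v => G.degree v = 1) with hL
  set D := Finset.univ.filter
      (fun v => G.degree v = 1 ∧
        ∀ u ∈ G.neighborFinset v, G.degree u ≠ 1 ∨ v < u) with hD
  -- unique neighbor function
  set f : V → V := fun v => WithTop.untopD v ((G.neighborFinset v).min) with hf
  have hfspec : ∀ v u : V, G.neighborFinset v = {u} → f v = u := by
    intro v u h
    simp [hf, h, Finset.min_singleton, WithTop.untopD_coe]
  have hDL : D ⊆ L := by
    intro v hv
    simp only [hD, Finset.mem_filter] at hv
    simp [hL, hv.2.1]
  have hunique : ∀ v ∈ L, G.neighborFinset v = {f v} := by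
    intro v hv
    simp only [hL, Finset.mem_filter] at hv
    have : (G.neighborFinset v).card = 1 := hv.2
    obtain ⟨u, hu⟩ := Finset.card_eq_one.mp this
    rw [hfspec v u hu]; exact hu
  -- injection from L \ D into D
  have hinj : Set.InjOn f ↑(L \ D) := by
    intro a ha b hb hab
    simp only [Finset.coe_sdiff, Set.mem_diff, Finset.mem_coe] at ha hb
    have ha' := hunique a ha.1
    have hb' := hunique b hb.1
    -- a's neighbor is f a; a ∈ adj of f a
    have haa : G.Adj a (f a) := by
      have := Finset.mem_singleton_self (f a); rw [← ha'] at this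
      exact (SimpleGraph.mem_neighborFinset _ _ _).mp this
    have hbb : G.Adj b (f b) := by
      have := Finset.mem_singleton_self (f b); rw [← hb'] at this
      exact (SimpleGraph.mem_neighborFinset _ _ _).mp this
    -- f a is a leaf (since a ∉ D) and f (f a) = a
    have hL1 : ∀ c ∈ L, c ∉ D → G.degree (f c) = 1 ∧ f c < c := by
      intro c hc hcD
      simp only [hL, Finset.mem_filter] at hc
      simp only [hD, Finset.mem_filter, Finset.mem_univ, true_and] at hcD
      push_neg at hcD
      obtain ⟨u, hu, hdeg, hlt⟩ := hcD hc.2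
      rw [hunique c (by simp [hL, hc.2]), Finset.mem_singleton] at hu
      subst hu
      constructor
      · exact hdeg
      · have hadj : G.Adj c (f c) := by
          have := Finset.mem_singleton_self (f c)
          rw [← hunique c (by simp [hL, hc.2])] at this
          exact (SimpleGraph.mem_neighborFinset _ _ _).mp this
        exact lt_of_le_of_ne hlt (fun h => G.loopless.irrefl c (by rw [h] at hadj; exact hadj))
    have h1 := hL1 a ha.1 ha.2
    have h2 := hL1 b hb.1 hb.2
    -- f (f a) = a since f a has degree 1 and adj to a
    have key : ∀ c, G.degree (f c) = 1 → G.Adj c (f c) → f (f c) = c := by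
      intro c hdeg hadj
      have hmem : c ∈ G.neighborFinset (f c) :=
        (SimpleGraph.mem_neighborFinset _ _ _).mpr hadj.symm
      have hsing := hunique (f c) (by simp [hL, hdeg])
      rw [hsing, Finset.mem_singleton] at hmem
      exact hmem.symm
    calc a = f (f a) := (key a h1.1 haa).symm
      _ = f (f b) := by rw [hab]
      _ = b := key b h2.1 hbb
  have hmap : ∀ v ∈ L \ D, f v ∈ D := by
    intro v hv
    rw [Finset.mem_sdiff] at hv
    obtain ⟨hvL, hvD⟩ := hv
    have hdegv : G.degree v = 1 := by
      simpa [hL] using hvL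
    simp only [hD, Finset.mem_filter, Finset.mem_univ, true_and] at hvD ⊢
    push_neg at hvD
    obtain ⟨u, hu, hdeg, hle⟩ := hvD hdegv
    rw [hunique v hvL, Finset.mem_singleton] at hu
    subst hu
    have hadj : G.Adj v (f v) := by
      have := Finset.mem_singleton_self (f v)
      rw [← hunique v hvL] at this
      exact (SimpleGraph.mem_neighborFinset _ _ _).mp this
    have hfvlt : f v < v := lt_of_le_of_ne hle (fun h => G.loopless.irrefl v (by rw [h] at hadj; exact hadj))
    refine ⟨hdeg, ?_⟩
    intro u hu
    have hfvL : f v ∈ L := by simp [hL, hdeg]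
    rw [hunique (f v) hfvL, Finset.mem_singleton] at hu
    have hmem : v ∈ G.neighborFinset (f v) :=
      (SimpleGraph.mem_neighborFinset _ _ _).mpr hadj.symm
    rw [hunique (f v) hfvL, Finset.mem_singleton] at hmem
    rw [hu, ← hmem]
    exact Or.inr hfvlt
  have hcard : (L \ D).card ≤ D.card :=
    Finset.card_le_card_of_injOn f hmap hinj
  have : L.card ≤ (L \ D).card + D.card := by
    have := Finset.card_sdiff_add_card_eq_card hDL
    omega
  omega
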